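/- Let H be a finite subgroup of GL(e,ℂ) and let φ : ℂ^e → ℂ^e be a continuous map such that φ(w) ∈ H·w for every w ∈ ℂ^e. Then there exists h ∈ H such that φ(w) = h w for all w ∈ ℂ^e. -/

import Mathlib

open Matrix MvPolynomial

noncomputable section

/-- Action of an invertible complex matrix on a vector in `ℂ^d`. -/
def actCC {d : ℕ} (g : GL (Fin d) ℂ) (v : Fin d → ℂ) : Fin d → ℂ :=
  (g : Matrix (Fin d) (Fin d) ℂ).mulVec v

/-- Orbit of a vector under a subgroup of `GL (Fin d) ℂ`. -/
def orbitCC {d : ℕ} (G : Subgroup (GL (Fin d) ℂ)) (v : Fin d → ℂ) : Set (Fin d → ℂ) :=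
  {x | ∃ g ∈ G, actCC g v = x}

/-- `P` is a `G`-invariant complex polynomial. -/
def IsInvC {d : ℕ} (G : Subgroup (GL (Fin d) ℂ)) (P : MvPolynomial (Fin d) ℂ) : Prop :=
  ∀ g ∈ G, ∀ v : Fin d → ℂ, eval (actCC g v) P = eval v P

/-- The polynomial map `ℂ^d → ℂ^m` given by a family of complex polynomials. -/
def evalMapC {d m : ℕ} (p : Fin m → MvPolynomial (Fin d) ℂ) (v : Fin d → ℂ) : Fin m → ℂ :=
  fun i => eval v (p i)

/-- `G` contains no pseudoreflections: every nonidentity `g` has `rank (g - 1) ≥ 2`. -/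
def NoPseudoreflections {d : ℕ} (G : Subgroup (GL (Fin d) ℂ)) : Prop :=
  ∀ g ∈ G, g ≠ 1 → 2 ≤ ((g : Matrix (Fin d) (Fin d) ℂ) - 1).rank

/-- a continuous map sending each `w` into its `H`-orbit is given
by a single element `h ∈ H`. -/
theorem stmt_11 (e : ℕ) (H : Subgroup (GL (Fin e) ℂ)) [Finite H]
    (φ : (Fin e → ℂ) → (Fin e → ℂ)) (hcont : Continuous φ)
    (horb : ∀ w : Fin e → ℂ, φ w ∈ orbitCC H w) :
    ∃ h ∈ H, ∀ w : Fin e → ℂ, φ w = actCC h w := by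
  classical
  haveI : Fintype H := Fintype.ofFinite H
  -- continuity of the linear actions
  have hact : ∀ g : GL (Fin e) ℂ, Continuous fun w => actCC g w := by
    intro g
    have := (Matrix.mulVecLin (g : Matrix (Fin e) (Fin e) ℂ)).continuous_of_finiteDimensional
    exact this
  -- the agreement sets
  set S : H → Set (Fin e → ℂ) :=
    fun g => {w | φ w = actCC (g : GL (Fin e) ℂ) w} with hSdef
  have hSclosed : ∀ g, IsClosed (S g) := fun g => isClosed_eq hcont (hact g)
  -- the "bad" set where two distinct group elements agree
  set Z : Set (Fin e → ℂ) :=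
    {w | ∃ g g' : H, g ≠ g' ∧
      actCC (g : GL (Fin e) ℂ) w = actCC (g' : GL (Fin e) ℂ) w} with hZdef
  -- Zᶜ is dense
  have hZdense : Dense Zᶜ := by
    have hZeq : Zᶜ = ⋂ p : H × H,
        {w | p.1 = p.2 ∨
          actCC (p.1 : GL (Fin e) ℂ) w ≠ actCC (p.2 : GL (Fin e) ℂ) w} := by
      ext w
      simp only [hZdef, Set.mem_compl_iff, Set.mem_setOf_eq, Set.mem_iInter, not_exists,
        Prod.forall]
      constructor
      · intro h g g'
        by_cases hg : g = g'
        · exact Or.inl hg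
        · exact Or.inr fun heq => h g g' ⟨hg, heq⟩
      · rintro h g g' ⟨hg, heq⟩
        rcases h g g' with h' | h'
        · exact hg h'
        · exact h' heq
    rw [hZeq]
    refine dense_iInter_of_isOpen ?_ ?_
    · intro p
      by_cases hp : p.1 = p.2
      · have : {w : Fin e → ℂ | p.1 = p.2 ∨
            actCC (p.1 : GL (Fin e) ℂ) w ≠ actCC (p.2 : GL (Fin e) ℂ) w} = Set.univ := by
          ext w; simp [hp]
        rw [this]; exact isOpen_univ
      · have : {w : Fin e → ℂ | p.1 = p.2 ∨
            actCC (p.1 : GL (Fin e) ℂ) w ≠ actCC (p.2 : GL (Fin e) ℂ) w} =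
            {w | actCC (p.1 : GL (Fin e) ℂ) w = actCC (p.2 : GL (Fin e) ℂ) w}ᶜ := by
          ext w; simp [hp]
        rw [this]
        exact (isClosed_eq (hact _) (hact _)).isOpen_compl
    · intro p
      by_cases hp : p.1 = p.2
      · have : {w : Fin e → ℂ | p.1 = p.2 ∨
            actCC (p.1 : GL (Fin e) ℂ) w ≠ actCC (p.2 : GL (Fin e) ℂ) w} = Set.univ := by
          ext w; simp [hp]
        rw [this]; exact dense_univ
      · have hset : {w : Fin e → ℂ | p.1 = p.2 ∨
            actCC (p.1 : GL (Fin e) ℂ) w ≠ actCC (p.2 : GL (Fin e) ℂ) w} =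
            ((LinearMap.ker (Matrix.mulVecLin
              ((p.1 : GL (Fin e) ℂ) - (p.2 : GL (Fin e) ℂ) : Matrix (Fin e) (Fin e) ℂ)) :
                Set (Fin e → ℂ)))ᶜ := by
          ext w
          simp only [Set.mem_setOf_eq, Set.mem_compl_iff, SetLike.mem_coe, LinearMap.mem_ker,
            Matrix.mulVecLin_apply, Matrix.sub_mulVec, hp, false_or, actCC, sub_eq_zero]
        rw [hset, ← interior_eq_empty_iff_dense_compl]
        by_contra hne
        have hKtop := Submodule.eq_top_of_nonempty_interior'
          (LinearMap.ker (Matrix.mulVecLin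
            ((p.1 : GL (Fin e) ℂ) - (p.2 : GL (Fin e) ℂ) : Matrix (Fin e) (Fin e) ℂ)))
          (Set.nonempty_iff_ne_empty.2 hne)
        -- hence the two matrices are equal, so p.1 = p.2
        apply hp
        have hmat : ((p.1 : GL (Fin e) ℂ) : Matrix (Fin e) (Fin e) ℂ) =
            ((p.2 : GL (Fin e) ℂ) : Matrix (Fin e) (Fin e) ℂ) := by
          ext i j
          have hv := (Submodule.eq_top_iff'.1 hKtop) (Pi.single j 1)
          rw [LinearMap.mem_ker, Matrix.mulVecLin_apply, Matrix.sub_mulVec] at hv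
          have := congrFun hv i
          simpa [Matrix.mulVec_single, sub_eq_zero] using this
        exact Subtype.ext (Units.ext hmat)
  -- key step: on Zᶜ the group element realizing φ is globally constant
  have key : ∀ g : H, ∀ x y : Fin e → ℂ, x ∉ Z → y ∉ Z → x ∈ S g → y ∈ S g := by
    intro g x y hx hy hxg
    by_contra hyg
    set ℓ : ℂ → (Fin e → ℂ) := fun t => x + t • (y - x) with hldef
    have hlcont : Continuous ℓ := continuous_const.add (continuous_id.smul continuous_const)
    have hl0 : ℓ 0 = x := by simp [hldef]
    have hl1 : ℓ 1 = y := by simp [hldef]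
    set T : Set ℂ := {t | ℓ t ∈ Z} with hTdef
    -- T is countable
    have hTc : T.Countable := by
      have hsub : T ⊆ ⋃ p : H × H, {t : ℂ | p.1 ≠ p.2 ∧
          actCC (p.1 : GL (Fin e) ℂ) (ℓ t) = actCC (p.2 : GL (Fin e) ℂ) (ℓ t)} := by
        rintro t ⟨g1, g2, hne, heq⟩
        exact Set.mem_iUnion.2 ⟨(g1, g2), hne, heq⟩
      refine Set.Countable.mono hsub (Set.countable_iUnion fun p => ?_)
      refine Set.Subsingleton.countable ?_
      rintro t1 ⟨hne, h1⟩ t2 ⟨_, h2⟩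
      set M : Matrix (Fin e) (Fin e) ℂ :=
        ((p.1 : GL (Fin e) ℂ) : Matrix (Fin e) (Fin e) ℂ) -
          ((p.2 : GL (Fin e) ℂ) : Matrix (Fin e) (Fin e) ℂ) with hMdef
      have hMx : M.mulVec x ≠ 0 := by
        intro h0
        apply hx
        refine ⟨p.1, p.2, hne, ?_⟩
        have : M.mulVec x = ((p.1 : GL (Fin e) ℂ) : Matrix (Fin e) (Fin e) ℂ).mulVec x -
            ((p.2 : GL (Fin e) ℂ) : Matrix (Fin e) (Fin e) ℂ).mulVec x := by
          rw [hMdef, Matrix.sub_mulVec]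
        rw [this] at h0
        exact sub_eq_zero.1 h0
      have hline : ∀ t : ℂ, M.mulVec (ℓ t) = M.mulVec x + t • M.mulVec (y - x) := by
        intro t
        rw [hldef]
        simp [Matrix.mulVec_add, Matrix.mulVec_smul]
      have hz : ∀ t : ℂ, actCC (p.1 : GL (Fin e) ℂ) (ℓ t) = actCC (p.2 : GL (Fin e) ℂ) (ℓ t) →
          M.mulVec (ℓ t) = 0 := by
        intro t ht
        rw [hMdef, Matrix.sub_mulVec, sub_eq_zero]
        exact ht
      by_contra htne
      have e1 : M.mulVec x + t1 • M.mulVec (y - x) = 0 := by rw [← hline]; exact hz t1 h1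
      have e2 : M.mulVec x + t2 • M.mulVec (y - x) = 0 := by rw [← hline]; exact hz t2 h2
      have hdiff : (t1 - t2) • M.mulVec (y - x) = 0 := by
        have := congrArg₂ (· - ·) e1 e2
        simpa [sub_smul, add_sub_add_left_eq_sub] using this
      have hdir : M.mulVec (y - x) = 0 := by
        rcases smul_eq_zero.1 hdiff with h | h
        · exact absurd (sub_eq_zero.1 h) htne
        · exact h
      apply hMx
      have := e1
      rw [hdir, smul_zero, add_zero] at this
      exact this
    -- Tᶜ is preconnected
    have hTpc : IsPreconnected Tᶜ := by
      have hrank : 1 < Module.rank ℝ ℂ := by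
        rw [Complex.rank_real_complex]; norm_num
      exact (hTc.isPathConnected_compl_of_one_lt_rank hrank).isConnected.isPreconnected
    -- the two open sets
    set U : Set ℂ := ⋂ g' : H,
      {t | g' ≠ g → φ (ℓ t) ≠ actCC (g' : GL (Fin e) ℂ) (ℓ t)} with hUdef
    set V : Set ℂ := {t | φ (ℓ t) ≠ actCC (g : GL (Fin e) ℂ) (ℓ t)} with hVdef
    have hopen_ne : ∀ g' : GL (Fin e) ℂ,
        IsOpen {t : ℂ | φ (ℓ t) ≠ actCC g' (ℓ t)} := by
      intro g'
      have : {t : ℂ | φ (ℓ t) ≠ actCC g' (ℓ t)} = {t : ℂ | φ (ℓ t) = actCC g' (ℓ t)}ᶜ := rfl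
      rw [this]
      exact (isClosed_eq (hcont.comp hlcont) ((hact g').comp hlcont)).isOpen_compl
    have hUopen : IsOpen U := by
      refine isOpen_iInter_of_finite fun g' => ?_
      by_cases hgg : g' = g
      · have : {t : ℂ | g' ≠ g → φ (ℓ t) ≠ actCC (g' : GL (Fin e) ℂ) (ℓ t)} = Set.univ := by
          ext t; simp [hgg]
        rw [this]; exact isOpen_univ
      · have : {t : ℂ | g' ≠ g → φ (ℓ t) ≠ actCC (g' : GL (Fin e) ℂ) (ℓ t)} =
            {t : ℂ | φ (ℓ t) ≠ actCC (g' : GL (Fin e) ℂ) (ℓ t)} := by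
          ext t; simp [hgg]
        rw [this]; exact hopen_ne _
    have hVopen : IsOpen V := hopen_ne _
    -- coverage
    have hcover : Tᶜ ⊆ U ∪ V := by
      intro t ht
      by_cases hv : φ (ℓ t) = actCC (g : GL (Fin e) ℂ) (ℓ t)
      · left
        refine Set.mem_iInter.2 fun g' => ?_
        intro hgg' heq
        exact ht ⟨g, g', fun hc => hgg' hc.symm, by rw [← hv, heq]⟩
      · exact Or.inr hv
    -- 0 and 1
    have h0U : (0 : ℂ) ∈ Tᶜ ∩ U := by
      constructor
      · show ℓ 0 ∉ Z; rw [hl0]; exact hx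
      · refine Set.mem_iInter.2 fun g' hgg' heq => ?_
        rw [hl0] at heq
        exact hx ⟨g, g', fun hc => hgg' hc.symm, by rw [← hxg, heq]⟩
    have h1V : (1 : ℂ) ∈ Tᶜ ∩ V := by
      constructor
      · show ℓ 1 ∉ Z; rw [hl1]; exact hy
      · show φ (ℓ 1) ≠ actCC (g : GL (Fin e) ℂ) (ℓ 1)
        rw [hl1]; exact hyg
    obtain ⟨t, htT, htU, htV⟩ := hTpc U V hUopen hVopen hcover ⟨0, h0U⟩ ⟨1, h1V⟩
    obtain ⟨g0, hg0, hg0eq⟩ := horb (ℓ t)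
    by_cases hg0g : (⟨g0, hg0⟩ : H) = g
    · apply htV
      rw [← hg0eq]
      have hgl : g0 = (g : GL (Fin e) ℂ) := congrArg Subtype.val hg0g
      rw [hgl]
    · exact (Set.mem_iInter.1 htU ⟨g0, hg0⟩) hg0g hg0eq.symm
  -- conclude
  obtain ⟨x₀, hx₀⟩ : Zᶜ.Nonempty := hZdense.nonempty
  obtain ⟨h, hh, hhx⟩ := horb x₀
  refine ⟨h, hh, ?_⟩
  have hsub : Zᶜ ⊆ S ⟨h, hh⟩ := fun y hy => key ⟨h, hh⟩ x₀ y hx₀ hy hhx.symm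
  have hall : Set.univ ⊆ S ⟨h, hh⟩ := by
    rw [← hZdense.closure_eq]
    exact (hSclosed _).closure_subset_iff.2 hsub
  intro w
  exact hall (Set.mem_univ w)
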